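/- Let a, b ∈ ℝ with 4a ≠ b², and let r > 0. For μ ∈ ℝ set λ_a = 1 + a r², Q = √(r² + (b r²/2 − μ λ_a)²), λ = λ_a/Q, s_ω = r/Q, c_ω = (b r²/2 − μ λ_a)/Q, ϖ = λ − 2 a r s_ω − b c_ω, κ = ϖ s_ω and τ = −ϖ c_ω − b/2. Then the condition κ² + τ² = b²/4 − (b² − 4a) s_ω² holds for every μ ∈ ℝ if and only if b = 0, a > 0, and a r² = 3 + 2√2 or a r² = 3 − 2√2. -/

import Mathlib

lemma per_mu (a b r c : ℝ) (hr : 0 < r) :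
    (let la := 1 + a * r ^ 2
     let Q := Real.sqrt (r ^ 2 + c ^ 2)
     let l := la / Q
     let sω := r / Q
     let cω := c / Q
     let ϖ := l - 2 * a * r * sω - b * cω
     let κ := ϖ * sω
     let τ := -ϖ * cω - b / 2
     κ ^ 2 + τ ^ 2 = b ^ 2 / 4 - (b ^ 2 - 4 * a) * sω ^ 2) ↔
    (1 - a * r ^ 2) ^ 2 - (1 - a * r ^ 2) * b * c + (b ^ 2 - 4 * a) * r ^ 2 = 0 := by
  have hS : 0 < r ^ 2 + c ^ 2 := by positivity
  have hSne : r ^ 2 + c ^ 2 ≠ 0 := hS.ne'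
  set Q := Real.sqrt (r ^ 2 + c ^ 2) with hQdef
  have hQ2 : Q ^ 2 = r ^ 2 + c ^ 2 := Real.sq_sqrt hS.le
  have hQ0 : Q ≠ 0 := (Real.sqrt_pos.mpr hS).ne'
  dsimp only
  have hϖ : (1 + a * r ^ 2) / Q - 2 * a * r * (r / Q) - b * (c / Q)
      = (1 - a * r ^ 2 - b * c) / Q := by
    field_simp; ring
  rw [hϖ]
  have hmul : ∀ x y : ℝ, x / Q * (y / Q) = x * y / (r ^ 2 + c ^ 2) := fun x y => by
    rw [div_mul_div_comm, ← hQ2, sq]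
  have hpow : (r / Q) ^ 2 = r ^ 2 / (r ^ 2 + c ^ 2) := by rw [div_pow, hQ2]
  rw [hmul, hpow]
  have hneg : -((1 - a * r ^ 2 - b * c) / Q) * (c / Q)
      = -((1 - a * r ^ 2 - b * c) * c) / (r ^ 2 + c ^ 2) := by
    rw [neg_mul, hmul, neg_div]
  rw [hneg]
  rw [← sub_eq_zero]
  have hE : ((1 - a * r ^ 2 - b * c) * r / (r ^ 2 + c ^ 2)) ^ 2
      + (-((1 - a * r ^ 2 - b * c) * c) / (r ^ 2 + c ^ 2) - b / 2) ^ 2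
      - (b ^ 2 / 4 - (b ^ 2 - 4 * a) * (r ^ 2 / (r ^ 2 + c ^ 2)))
      = ((1 - a * r ^ 2) ^ 2 - (1 - a * r ^ 2) * b * c + (b ^ 2 - 4 * a) * r ^ 2)
        / (r ^ 2 + c ^ 2) := by
    field_simp
    ring
  rw [hE, div_eq_zero_iff]
  simp [hSne]


/-- For `4a ≠ b²` and `r > 0`, the biharmonicity condition
`κ² + τ² = b²/4 − (b² − 4a) s_ω²` of the geodesic helices of the rotational Hopf cylinder of
radius `r` holds for every slope parameter `μ ∈ ℝ` if and only if `b = 0`, `a > 0`, and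
`a r² = 3 + 2√2` or `a r² = 3 − 2√2`. -/
theorem totally_biharmonic_hopf_cylinder_iff (a b r : ℝ) (hab : 4 * a ≠ b ^ 2) (hr : 0 < r) :
    (∀ μ : ℝ,
      let la := 1 + a * r ^ 2
      let Q := Real.sqrt (r ^ 2 + (b * r ^ 2 / 2 - μ * la) ^ 2)
      let l := la / Q
      let sω := r / Q
      let cω := (b * r ^ 2 / 2 - μ * la) / Q
      let ϖ := l - 2 * a * r * sω - b * cω
      let κ := ϖ * sω
      let τ := -ϖ * cω - b / 2
      κ ^ 2 + τ ^ 2 = b ^ 2 / 4 - (b ^ 2 - 4 * a) * sω ^ 2) ↔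
    (b = 0 ∧ 0 < a ∧
      (a * r ^ 2 = 3 + 2 * Real.sqrt 2 ∨ a * r ^ 2 = 3 - 2 * Real.sqrt 2)) := by
  have h2 : Real.sqrt 2 ^ 2 = 2 := Real.sq_sqrt (by norm_num)
  have hr2 : (0:ℝ) < r ^ 2 := by positivity
  constructor
  · intro h
    have h' : ∀ μ : ℝ,
        (1 - a * r ^ 2) ^ 2 - (1 - a * r ^ 2) * b * (b * r ^ 2 / 2 - μ * (1 + a * r ^ 2))
          + (b ^ 2 - 4 * a) * r ^ 2 = 0 :=
      fun μ => (per_mu a b r (b * r ^ 2 / 2 - μ * (1 + a * r ^ 2)) hr).mp (h μ)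
    by_cases hla : 1 + a * r ^ 2 = 0
    · exfalso
      have h0 := h' 0
      have h8 : (8:ℝ) = 0 := by
        linear_combination h0 + (8 - (1 + a * r ^ 2) - b ^ 2 * r ^ 2 / 2) * hla
      norm_num at h8
    · have hml := h' (b * r ^ 2 / 2 / (1 + a * r ^ 2))
      have hc0 : b * r ^ 2 / 2 - b * r ^ 2 / 2 / (1 + a * r ^ 2) * (1 + a * r ^ 2) = 0 := by
        rw [div_mul_cancel₀ _ hla]; ring
      rw [hc0] at hml
      have hm1 := h' ((b * r ^ 2 / 2 - 1) / (1 + a * r ^ 2))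
      have hc1 : b * r ^ 2 / 2 - (b * r ^ 2 / 2 - 1) / (1 + a * r ^ 2) * (1 + a * r ^ 2) = 1 := by
        rw [div_mul_cancel₀ _ hla]; ring
      rw [hc1] at hm1
      have hAb : (1 - a * r ^ 2) * b = 0 := by linear_combination hml - hm1
      rcases mul_eq_zero.mp hAb with hA | hb
      · exfalso
        have hb2 : (b ^ 2 - 4 * a) * r ^ 2 = 0 := by
          linear_combination hml - (1 - a * r ^ 2) * hA - b * 0 * hA
        rcases mul_eq_zero.mp hb2 with hb2' | hr0
        · exact hab (by linarith)
        · exact hr2.ne' hr0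
      · subst hb
        have hml' : (1 - a * r ^ 2) ^ 2 - 4 * (a * r ^ 2) = 0 := by linear_combination hml
        have hx : 0 < a * r ^ 2 := by nlinarith [sq_nonneg (a * r ^ 2)]
        have ha : 0 < a := by nlinarith
        refine ⟨rfl, ha, ?_⟩
        have hprod : (a * r ^ 2 - 3 - 2 * Real.sqrt 2) * (a * r ^ 2 - 3 + 2 * Real.sqrt 2) = 0 := by
          linear_combination hml' - 4 * h2
        rcases mul_eq_zero.mp hprod with h | h
        · left; linarith
        · right; linarith
  · rintro ⟨hb, ha, hx⟩ μ
    subst hb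
    refine (per_mu a 0 r (0 * r ^ 2 / 2 - μ * (1 + a * r ^ 2)) hr).mpr ?_
    rcases hx with hx | hx
    · linear_combination (a * r ^ 2 - 3 + 2 * Real.sqrt 2) * hx + 4 * h2
    · linear_combination (a * r ^ 2 - 3 - 2 * Real.sqrt 2) * hx + 4 * h2
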